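/- Let n ≥ 5 be an integer. There exist a constant C > 0 and ℓ₀ ≥ 1 such that for every real ℓ ≥ ℓ₀, | I_R(ℓ) − √(π/(n−2)) · ℓ^{1/2} | ≤ C·ℓ^{−1/2}. In particular, ℓ^{−1/2} · I_R(ℓ) → √(π/(n−2)) as ℓ → ∞, so I_R(ℓ) > 0 for all sufficiently large ℓ. -/

import Mathlib

set_option maxHeartbeats 1000000

open Real Filter MeasureTheory

lemma gauss_sq (b x : ℝ) (hb : 0 < b) :
    x ^ 2 * Real.exp (-b * x ^ 2) ≤ (2 / b) * Real.exp (-(b / 2) * x ^ 2) := by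
  have e1 : Real.exp (-b * x ^ 2) =
      Real.exp (-(b / 2) * x ^ 2) * Real.exp (-(b / 2) * x ^ 2) := by
    rw [← Real.exp_add]; ring_nf
  have e2 : Real.exp (-(b / 2) * x ^ 2) * Real.exp ((b / 2) * x ^ 2) = 1 := by
    rw [← Real.exp_add]; ring_nf; exact Real.exp_zero
  have e3 : (b / 2) * x ^ 2 + 1 ≤ Real.exp ((b / 2) * x ^ 2) := Real.add_one_le_exp _
  have p1 := Real.exp_pos (-(b / 2) * x ^ 2)
  have h4 : Real.exp (-(b / 2) * x ^ 2) * ((b / 2) * x ^ 2 + 1) ≤ 1 := by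
    calc Real.exp (-(b / 2) * x ^ 2) * ((b / 2) * x ^ 2 + 1)
        ≤ Real.exp (-(b / 2) * x ^ 2) * Real.exp ((b / 2) * x ^ 2) :=
          mul_le_mul_of_nonneg_left e3 p1.le
      _ = 1 := e2
  have key : x ^ 2 * Real.exp (-(b / 2) * x ^ 2) ≤ 2 / b := by
    rw [le_div_iff₀ hb]
    nlinarith [mul_nonneg (sq_nonneg x) p1.le]
  rw [e1, ← mul_assoc]
  exact mul_le_mul_of_nonneg_right key p1.le

lemma gauss_quart (b x : ℝ) (hb : 0 < b) :
    x ^ 4 * Real.exp (-b * x ^ 2) ≤ (16 / b ^ 2) * Real.exp (-(b / 2) * x ^ 2) := by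
  have e1 : Real.exp (-b * x ^ 2) =
      Real.exp (-(b / 2) * x ^ 2) * Real.exp (-(b / 2) * x ^ 2) := by
    rw [← Real.exp_add]; ring_nf
  have e2 : Real.exp (-(b / 2) * x ^ 2) * Real.exp ((b / 2) * x ^ 2) = 1 := by
    rw [← Real.exp_add]; ring_nf; exact Real.exp_zero
  have e3 : (b / 4) * x ^ 2 + 1 ≤ Real.exp ((b / 4) * x ^ 2) := Real.add_one_le_exp _
  have e4 : Real.exp ((b / 4) * x ^ 2) * Real.exp ((b / 4) * x ^ 2)
      = Real.exp ((b / 2) * x ^ 2) := by rw [← Real.exp_add]; ring_nf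
  have p1 := Real.exp_pos (-(b / 2) * x ^ 2)
  have p3 := Real.exp_pos ((b / 4) * x ^ 2)
  have h5 : ((b / 4) * x ^ 2) ^ 2 ≤ Real.exp ((b / 2) * x ^ 2) := by
    rw [← e4]
    have t0 : 0 ≤ (b / 4) * x ^ 2 := by positivity
    nlinarith [mul_le_mul e3 e3 (by positivity) p3.le]
  have h4 : Real.exp (-(b / 2) * x ^ 2) * ((b / 4) * x ^ 2) ^ 2 ≤ 1 := by
    calc Real.exp (-(b / 2) * x ^ 2) * ((b / 4) * x ^ 2) ^ 2
        ≤ Real.exp (-(b / 2) * x ^ 2) * Real.exp ((b / 2) * x ^ 2) :=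
          mul_le_mul_of_nonneg_left h5 p1.le
      _ = 1 := e2
  have key : x ^ 4 * Real.exp (-(b / 2) * x ^ 2) ≤ 16 / b ^ 2 := by
    rw [le_div_iff₀ (by positivity : (0:ℝ) < b ^ 2)]
    nlinarith [mul_nonneg (mul_nonneg (sq_nonneg x) (sq_nonneg x)) p1.le]
  rw [e1, ← mul_assoc]
  exact mul_le_mul_of_nonneg_right key p1.le

lemma cont_rpow (a : ℝ) (ha : 0 ≤ a) : Continuous fun s : ℝ => (1 - s ^ 2) ^ (a / 2) := by
  rw [continuous_iff_continuousAt]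
  intro s
  exact (Real.continuousAt_rpow_const _ _ (Or.inr (by positivity))).comp
    (by fun_prop : ContinuousAt (fun s : ℝ => 1 - s ^ 2) s)

lemma ibp (a ℓ : ℝ) (ha : 3 ≤ a) :
    (∫ s in (-1:ℝ)..1, Real.exp (-(a * ℓ) * s ^ 2) * (1 - s ^ 2) ^ (a / 2) *
      ((a + 2) / 2 + 2 * ℓ - 2 * (a + 3) * ℓ * s ^ 2 + (-2 * a) * ℓ ^ 2 * s ^ 2 * (1 - s ^ 2)))
    = ∫ s in (-1:ℝ)..1, Real.exp (-(a * ℓ) * s ^ 2) * (1 - s ^ 2) ^ (a / 2) *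
      ((a + 2) / 2 + ℓ - (a + 3) * ℓ * s ^ 2) := by
  set g1 : ℝ → ℝ := fun s => Real.exp (-(a * ℓ) * s ^ 2) * (1 - s ^ 2) ^ (a / 2) *
      ((a + 2) / 2 + 2 * ℓ - 2 * (a + 3) * ℓ * s ^ 2 + (-2 * a) * ℓ ^ 2 * s ^ 2 * (1 - s ^ 2))
    with hg1
  set g2 : ℝ → ℝ := fun s => Real.exp (-(a * ℓ) * s ^ 2) * (1 - s ^ 2) ^ (a / 2) *
      ((a + 2) / 2 + ℓ - (a + 3) * ℓ * s ^ 2) with hg2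
  have hc : Continuous fun s : ℝ => (1 - s ^ 2) ^ (a / 2) := cont_rpow a (by linarith)
  have hce : Continuous fun s : ℝ => Real.exp (-(a * ℓ) * s ^ 2) := by fun_prop
  have hg1c : Continuous g1 := by rw [hg1]; exact (hce.mul hc).mul (by fun_prop)
  have hg2c : Continuous g2 := by rw [hg2]; exact (hce.mul hc).mul (by fun_prop)
  have hpne : a / 2 + 1 ≠ 0 := by positivity
  set F : ℝ → ℝ := fun s => ℓ * s * Real.exp (-(a * ℓ) * s ^ 2) * (1 - s ^ 2) ^ (a / 2 + 1)
    with hF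
  have hderiv : ∀ s ∈ Set.uIcc (-1:ℝ) 1, HasDerivAt F (g1 s - g2 s) s := by
    intro s hs
    rw [Set.uIcc_of_le (by norm_num)] at hs
    obtain ⟨hs1, hs2⟩ := hs
    have hx : (0:ℝ) ≤ 1 - s ^ 2 := by nlinarith
    have h1 : HasDerivAt (fun t : ℝ => ℓ * t) ℓ s := by
      simpa using (hasDerivAt_id s).const_mul ℓ
    have h2i : HasDerivAt (fun t : ℝ => -(a * ℓ) * t ^ 2) (-(a * ℓ) * (2 * s)) s := by
      simpa [mul_comm] using (hasDerivAt_pow 2 s).const_mul (-(a * ℓ))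
    have h2 := h2i.exp
    have h3i : HasDerivAt (fun t : ℝ => 1 - t ^ 2) (-(2 * s)) s := by
      simpa using ((hasDerivAt_pow 2 s).const_sub 1)
    have h3 : HasDerivAt (fun t : ℝ => (1 - t ^ 2) ^ (a / 2 + 1))
        ((a / 2 + 1) * (1 - s ^ 2) ^ (a / 2 + 1 - 1) * (-(2 * s))) s :=
      (Real.hasDerivAt_rpow_const (p := a / 2 + 1) (Or.inr (by linarith))).comp s h3i
    have h := (h1.mul h2).mul h3
    have hpow : (1 - s ^ 2) ^ (a / 2 + 1) = (1 - s ^ 2) ^ (a / 2) * (1 - s ^ 2) := by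
      rw [Real.rpow_add' hx hpne, Real.rpow_one]
    have hpow2 : (1 - s ^ 2) ^ (a / 2 + 1 - 1) = (1 - s ^ 2) ^ (a / 2) := by
      norm_num
    rw [hF]
    refine h.congr_deriv ?_
    rw [hpow, hpow2]
    simp only [hg1, hg2, Pi.mul_apply]
    ring
  have hint : IntervalIntegrable (fun s => g1 s - g2 s) MeasureTheory.volume (-1) 1 :=
    (hg1c.sub hg2c).intervalIntegrable _ _
  have hzero : (∫ s in (-1:ℝ)..1, (g1 s - g2 s)) = 0 := by
    rw [intervalIntegral.integral_eq_sub_of_hasDerivAt hderiv hint]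
    have hF1 : F 1 = 0 := by
      simp [hF, Real.zero_rpow hpne]
    have hF2 : F (-1) = 0 := by
      simp [hF, Real.zero_rpow hpne]
    rw [hF1, hF2, sub_zero]
  have hs := intervalIntegral.integral_sub (hg1c.intervalIntegrable (μ := MeasureTheory.volume) (-1) 1)
    (hg2c.intervalIntegrable (μ := MeasureTheory.volume) (-1) 1)
  rw [hzero] at hs
  linarith [hs]

lemma int_upper (b : ℝ) (hb : 0 < b) :
    (∫ s in (-1:ℝ)..1, Real.exp (-b * s ^ 2)) ≤ Real.sqrt (π / b) := by
  rw [intervalIntegral.integral_of_le (by norm_num : (-1:ℝ) ≤ 1)]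
  rw [← integral_gaussian b]
  exact setIntegral_le_integral (integrable_exp_neg_mul_sq hb)
    (Filter.Eventually.of_forall fun x => (Real.exp_pos _).le)

lemma int_lower (b : ℝ) (hb : 0 < b) :
    Real.sqrt (π / b) - (2 / b) * Real.sqrt (π / (b / 2))
      ≤ ∫ s in (-1:ℝ)..1, Real.exp (-b * s ^ 2) := by
  have hb2 : 0 < b / 2 := by linarith
  have hint : Integrable (fun x : ℝ => Real.exp (-b * x ^ 2)) := integrable_exp_neg_mul_sq hb
  have hind : Integrable ((Set.Ioc (-1:ℝ) 1).indicator fun x : ℝ => Real.exp (-b * x ^ 2)) :=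
    hint.indicator measurableSet_Ioc
  have hint2 : Integrable (fun x : ℝ => (2 / b) * Real.exp (-(b / 2) * x ^ 2)) :=
    (integrable_exp_neg_mul_sq hb2).const_mul _
  have hJ : (∫ s in (-1:ℝ)..1, Real.exp (-b * s ^ 2))
      = ∫ x : ℝ, (Set.Ioc (-1:ℝ) 1).indicator (fun x => Real.exp (-b * x ^ 2)) x := by
    rw [intervalIntegral.integral_of_le (by norm_num : (-1:ℝ) ≤ 1),
      integral_indicator measurableSet_Ioc]
  have hmono : ∀ x : ℝ, Real.exp (-b * x ^ 2)
      - (Set.Ioc (-1:ℝ) 1).indicator (fun x => Real.exp (-b * x ^ 2)) x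
      ≤ (2 / b) * Real.exp (-(b / 2) * x ^ 2) := by
    intro x
    by_cases hx : x ∈ Set.Ioc (-1:ℝ) 1
    · rw [Set.indicator_of_mem hx]
      simp only [sub_self]
      positivity
    · rw [Set.indicator_of_notMem hx]
      rw [Set.mem_Ioc] at hx
      push_neg at hx
      have hx2 : 1 ≤ x ^ 2 := by
        rcases le_or_gt x (-1) with h | h
        · nlinarith
        · have := hx h; nlinarith
      have h1 : Real.exp (-b * x ^ 2) ≤ x ^ 2 * Real.exp (-b * x ^ 2) := by
        nlinarith [Real.exp_pos (-b * x ^ 2)]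
      simpa using h1.trans (gauss_sq b x hb)
  have hkey := integral_mono (hint.sub hind) hint2 hmono
  simp only [Pi.sub_apply] at hkey
  rw [integral_sub hint hind, integral_gaussian,
    integral_const_mul, integral_gaussian] at hkey
  rw [hJ]
  linarith

lemma ptbound (a ℓ s : ℝ) (ha : 3 ≤ a) (hℓ : 1 ≤ ℓ) (hs : s ^ 2 ≤ 1) :
    |Real.exp (-(a * ℓ) * s ^ 2) * (1 - s ^ 2) ^ (a / 2) *
        ((a + 2) / 2 + ℓ - (a + 3) * ℓ * s ^ 2)
      - ℓ * Real.exp (-(a * ℓ) * s ^ 2)| ≤ 5 * (a + 3) * Real.exp (-(a * ℓ / 2) * s ^ 2) := by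
  have hℓ0 : (0:ℝ) < ℓ := by linarith
  have ha0 : (0:ℝ) < a := by linarith
  have hb : (0:ℝ) < a * ℓ := by positivity
  have hs0 : (0:ℝ) ≤ s ^ 2 := sq_nonneg s
  set E := Real.exp (-(a * ℓ) * s ^ 2) with hE
  set X := Real.exp (-(a * ℓ / 2) * s ^ 2) with hX
  have hE0 : 0 < E := Real.exp_pos _
  have hX0 : 0 < X := Real.exp_pos _
  have hEX : E ≤ X := by
    rw [hE, hX]
    apply Real.exp_le_exp.mpr
    nlinarith
  have ht1 : s ^ 2 * E ≤ 2 / (a * ℓ) * X := gauss_sq (a * ℓ) s hb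
  have ht2 : s ^ 4 * E ≤ 16 / (a * ℓ) ^ 2 * X := gauss_quart (a * ℓ) s hb
  have hx01 : (0:ℝ) ≤ 1 - s ^ 2 := by linarith
  have hx11 : 1 - s ^ 2 ≤ 1 := by linarith
  set R := (1 - s ^ 2) ^ (a / 2) with hR
  have hR1 : R ≤ 1 := Real.rpow_le_one hx01 hx11 (by positivity)
  have hR0 : 0 ≤ R := Real.rpow_nonneg hx01 _
  have hR2 : 1 - a / 2 * s ^ 2 ≤ R := by
    have h := one_add_mul_self_le_rpow_one_add (s := -s ^ 2) (by linarith)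
      (p := a / 2) (by linarith)
    rw [show (1 + -s ^ 2 : ℝ) = 1 - s ^ 2 by ring] at h
    rw [hR]; linarith
  set P := (a + 2) / 2 + ℓ - (a + 3) * ℓ * s ^ 2 with hP
  have habs : |R * P - ℓ| ≤ a / 2 * s ^ 2 * ((a + 2) / 2 + ℓ) + a / 2 * (a + 3) * ℓ * s ^ 4
      + (a + 2) / 2 + (a + 3) * ℓ * s ^ 2 := by
    have hPabs : |P| ≤ (a + 2) / 2 + ℓ + (a + 3) * ℓ * s ^ 2 := by
      rw [hP, abs_le]; constructor <;> nlinarith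
    have hRabs : |R - 1| ≤ a / 2 * s ^ 2 := by
      rw [abs_le]; constructor <;> nlinarith
    have hPl : |P - ℓ| ≤ (a + 2) / 2 + (a + 3) * ℓ * s ^ 2 := by
      rw [hP, abs_le]; constructor <;> nlinarith
    calc |R * P - ℓ| = |(R - 1) * P + (P - ℓ)| := by
          rw [show (R - 1) * P + (P - ℓ) = R * P - ℓ by ring]
      _ ≤ |(R - 1) * P| + |P - ℓ| := abs_add_le _ _
      _ = |R - 1| * |P| + |P - ℓ| := by rw [abs_mul]
      _ ≤ (a / 2 * s ^ 2) * ((a + 2) / 2 + ℓ + (a + 3) * ℓ * s ^ 2)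
            + ((a + 2) / 2 + (a + 3) * ℓ * s ^ 2) :=
          add_le_add (mul_le_mul hRabs hPabs (abs_nonneg _)
            (mul_nonneg (by linarith) hs0)) hPl
      _ = _ := by ring
  have key : E * R * P - ℓ * E = E * (R * P - ℓ) := by ring
  rw [key, abs_mul, abs_of_pos hE0]
  have step1 : E * |R * P - ℓ| ≤ E * (a / 2 * s ^ 2 * ((a + 2) / 2 + ℓ)
      + a / 2 * (a + 3) * ℓ * s ^ 4 + (a + 2) / 2 + (a + 3) * ℓ * s ^ 2) :=
    mul_le_mul_of_nonneg_left habs hE0.le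
  have hc1nn : (0:ℝ) ≤ a / 2 * ((a + 2) / 2 + ℓ) := by nlinarith
  have T1 : a / 2 * ((a + 2) / 2 + ℓ) * (s ^ 2 * E) ≤ ((a + 2) / 2 + 1) * X := by
    have hc : a / 2 * ((a + 2) / 2 + ℓ) * (2 / (a * ℓ)) ≤ (a + 2) / 2 + 1 := by
      have he : a / 2 * ((a + 2) / 2 + ℓ) * (2 / (a * ℓ)) = ((a + 2) / 2 + ℓ) / ℓ := by
        field_simp
      rw [he, div_le_iff₀ hℓ0]; nlinarith
    calc a / 2 * ((a + 2) / 2 + ℓ) * (s ^ 2 * E)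
        ≤ a / 2 * ((a + 2) / 2 + ℓ) * (2 / (a * ℓ) * X) :=
          mul_le_mul_of_nonneg_left ht1 hc1nn
      _ = (a / 2 * ((a + 2) / 2 + ℓ) * (2 / (a * ℓ))) * X := by ring
      _ ≤ ((a + 2) / 2 + 1) * X := mul_le_mul_of_nonneg_right hc hX0.le
  have hc2nn : (0:ℝ) ≤ a / 2 * (a + 3) * ℓ := by nlinarith
  have T2 : a / 2 * (a + 3) * ℓ * (s ^ 4 * E) ≤ 3 * (a + 3) * X := by
    have hc : a / 2 * (a + 3) * ℓ * (16 / (a * ℓ) ^ 2) ≤ 3 * (a + 3) := by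
      have he : a / 2 * (a + 3) * ℓ * (16 / (a * ℓ) ^ 2) = 8 * (a + 3) / (a * ℓ) := by
        field_simp; ring
      rw [he, div_le_iff₀ hb]; nlinarith
    calc a / 2 * (a + 3) * ℓ * (s ^ 4 * E)
        ≤ a / 2 * (a + 3) * ℓ * (16 / (a * ℓ) ^ 2 * X) :=
          mul_le_mul_of_nonneg_left ht2 hc2nn
      _ = (a / 2 * (a + 3) * ℓ * (16 / (a * ℓ) ^ 2)) * X := by ring
      _ ≤ 3 * (a + 3) * X := mul_le_mul_of_nonneg_right hc hX0.le
  have T3 : (a + 2) / 2 * E ≤ (a + 2) / 2 * X :=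
    mul_le_mul_of_nonneg_left hEX (by linarith)
  have T4 : (a + 3) * ℓ * (s ^ 2 * E) ≤ (a + 3) * X := by
    have hc : (a + 3) * ℓ * (2 / (a * ℓ)) ≤ a + 3 := by
      have he : (a + 3) * ℓ * (2 / (a * ℓ)) = 2 * (a + 3) / a := by field_simp
      rw [he, div_le_iff₀ ha0]; nlinarith
    calc (a + 3) * ℓ * (s ^ 2 * E) ≤ (a + 3) * ℓ * (2 / (a * ℓ) * X) :=
          mul_le_mul_of_nonneg_left ht1 (by nlinarith)
      _ = ((a + 3) * ℓ * (2 / (a * ℓ))) * X := by ring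
      _ ≤ (a + 3) * X := mul_le_mul_of_nonneg_right hc hX0.le
  have expand : E * (a / 2 * s ^ 2 * ((a + 2) / 2 + ℓ) + a / 2 * (a + 3) * ℓ * s ^ 4
      + (a + 2) / 2 + (a + 3) * ℓ * s ^ 2)
      = a / 2 * ((a + 2) / 2 + ℓ) * (s ^ 2 * E) + a / 2 * (a + 3) * ℓ * (s ^ 4 * E)
        + (a + 2) / 2 * E + (a + 3) * ℓ * (s ^ 2 * E) := by ring
  rw [expand] at step1
  linarith [step1, T1, T2, T3, T4]

lemma est (a ℓ : ℝ) (ha : 3 ≤ a) (hℓ : 1 ≤ ℓ) :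
    |(∫ s in (-1:ℝ)..1, Real.exp (-(a * ℓ) * s ^ 2) * (1 - s ^ 2) ^ (a / 2) *
        ((a + 2) / 2 + ℓ - (a + 3) * ℓ * s ^ 2)) - Real.sqrt (π / a) * ℓ ^ ((1:ℝ)/2)|
      ≤ 18 * (a + 3) * ℓ ^ (-(1:ℝ)/2) := by
  have hℓ0 : (0:ℝ) < ℓ := by linarith
  have ha0 : (0:ℝ) < a := by linarith
  have hb : (0:ℝ) < a * ℓ := by positivity
  have hb2 : (0:ℝ) < a * ℓ / 2 := by positivity
  have hsq : Real.sqrt ℓ > 0 := Real.sqrt_pos.mpr hℓ0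
  have hEc : Continuous fun s : ℝ => Real.exp (-(a * ℓ) * s ^ 2) := by fun_prop
  have hgc : Continuous fun s : ℝ => Real.exp (-(a * ℓ) * s ^ 2) * (1 - s ^ 2) ^ (a / 2) *
      ((a + 2) / 2 + ℓ - (a + 3) * ℓ * s ^ 2) :=
    (hEc.mul (cont_rpow a (by linarith))).mul (by fun_prop)
  set I2 : ℝ := ∫ s in (-1:ℝ)..1, Real.exp (-(a * ℓ) * s ^ 2) * (1 - s ^ 2) ^ (a / 2) *
      ((a + 2) / 2 + ℓ - (a + 3) * ℓ * s ^ 2) with hI2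
  set J : ℝ := ∫ s in (-1:ℝ)..1, Real.exp (-(a * ℓ) * s ^ 2) with hJ
  set G : ℝ := Real.sqrt (π / (a * ℓ / 2)) with hG
  have hG0 : 0 ≤ G := Real.sqrt_nonneg _
  -- step 1 : |I2 - ℓ * J| ≤ 5 (a+3) G
  have h1 : |I2 - ℓ * J| ≤ 5 * (a + 3) * G := by
    have hsub : I2 - ℓ * J = ∫ s in (-1:ℝ)..1,
        (Real.exp (-(a * ℓ) * s ^ 2) * (1 - s ^ 2) ^ (a / 2) *
          ((a + 2) / 2 + ℓ - (a + 3) * ℓ * s ^ 2) - ℓ * Real.exp (-(a * ℓ) * s ^ 2)) := by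
      rw [intervalIntegral.integral_sub (hgc.intervalIntegrable (μ := volume) (-1) 1)
        (Continuous.intervalIntegrable (u := fun s : ℝ => ℓ * Real.exp (-(a * ℓ) * s ^ 2)) (μ := volume) (continuous_const.mul hEc) (-1) 1),
        intervalIntegral.integral_const_mul]
    rw [hsub]
    have hbdd : ∀ᵐ t ∂(volume.restrict (Set.uIoc (-1:ℝ) 1)),
        ‖Real.exp (-(a * ℓ) * t ^ 2) * (1 - t ^ 2) ^ (a / 2) *
          ((a + 2) / 2 + ℓ - (a + 3) * ℓ * t ^ 2) - ℓ * Real.exp (-(a * ℓ) * t ^ 2)‖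
        ≤ 5 * (a + 3) * Real.exp (-(a * ℓ / 2) * t ^ 2) := by
      refine (ae_restrict_iff' measurableSet_uIoc).mpr (Filter.Eventually.of_forall fun t ht => ?_)
      rw [Set.uIoc_of_le (by norm_num : (-1:ℝ) ≤ 1)] at ht
      rw [Real.norm_eq_abs]
      exact ptbound a ℓ t ha hℓ (by nlinarith [ht.1, ht.2])
    have hbint : IntervalIntegrable (fun t : ℝ => 5 * (a + 3) * Real.exp (-(a * ℓ / 2) * t ^ 2))
        volume (-1) 1 := (Continuous.intervalIntegrable (by fun_prop) _ _)
    refine (intervalIntegral.norm_integral_le_abs_of_norm_le hbdd hbint).trans ?_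
    rw [intervalIntegral.integral_const_mul]
    have hipos : 0 ≤ ∫ s in (-1:ℝ)..1, Real.exp (-(a * ℓ / 2) * s ^ 2) :=
      intervalIntegral.integral_nonneg (by norm_num) (fun t _ => (Real.exp_pos _).le)
    have hup := int_upper (a * ℓ / 2) hb2
    rw [abs_of_nonneg (by nlinarith : (0:ℝ) ≤ 5 * (a + 3) *
      ∫ s in (-1:ℝ)..1, Real.exp (-(a * ℓ / 2) * s ^ 2))]
    rw [hG]
    nlinarith
  -- step 2 : |ℓ J - ℓ √(π/(aℓ))| ≤ ℓ * (2/(aℓ)) * G  ≤ G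
  have h2 : |ℓ * J - ℓ * Real.sqrt (π / (a * ℓ))| ≤ G := by
    have hlo := int_lower (a * ℓ) hb
    have hup := int_upper (a * ℓ) hb
    have habs : |J - Real.sqrt (π / (a * ℓ))| ≤ 2 / (a * ℓ) * G := by
      rw [abs_le]; constructor
      · rw [hJ, hG]; linarith
      · rw [hJ, hG]; nlinarith [Real.sqrt_nonneg (π / (a * ℓ / 2)), hlo, hup]
    have : |ℓ * J - ℓ * Real.sqrt (π / (a * ℓ))| = ℓ * |J - Real.sqrt (π / (a * ℓ))| := by
      rw [← mul_sub, abs_mul, abs_of_pos hℓ0]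
    rw [this]
    have hcoef : ℓ * (2 / (a * ℓ)) = 2 / a := by field_simp
    calc ℓ * |J - Real.sqrt (π / (a * ℓ))| ≤ ℓ * (2 / (a * ℓ) * G) :=
          mul_le_mul_of_nonneg_left habs hℓ0.le
      _ = (2 / a) * G := by rw [← hcoef]; ring
      _ ≤ 1 * G := by
          apply mul_le_mul_of_nonneg_right _ hG0
          rw [div_le_one ha0]; linarith
      _ = G := one_mul G
  -- step 3 : exact value
  have h3 : ℓ * Real.sqrt (π / (a * ℓ)) = Real.sqrt (π / a) * ℓ ^ ((1:ℝ)/2) := by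
    have e1 : π / (a * ℓ) = (π / a) / ℓ := by rw [div_div]
    rw [e1, Real.sqrt_div (by positivity : (0:ℝ) ≤ π / a) ℓ]
    rw [show ℓ ^ ((1:ℝ)/2) = Real.sqrt ℓ from (Real.sqrt_eq_rpow ℓ).symm]
    rw [show ℓ * (Real.sqrt (π / a) / Real.sqrt ℓ)
        = Real.sqrt (π / a) * (ℓ / Real.sqrt ℓ) by ring, Real.div_sqrt]
  -- step 4 : G ≤ 3 ℓ^{-1/2}
  have h4 : G ≤ 3 * ℓ ^ (-(1:ℝ)/2) := by
    have h9 : π / (a * ℓ / 2) ≤ 9 / ℓ := by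
      rw [div_le_div_iff₀ (by positivity) hℓ0]
      nlinarith [Real.pi_le_four]
    have hs1 : G ≤ Real.sqrt (9 / ℓ) := by rw [hG]; exact Real.sqrt_le_sqrt h9
    have hs2 : Real.sqrt (9 / ℓ) = 3 / Real.sqrt ℓ := by
      rw [Real.sqrt_div (by norm_num : (0:ℝ) ≤ 9) ℓ,
        show (9:ℝ) = 3 ^ 2 by norm_num, Real.sqrt_sq (by norm_num : (0:ℝ) ≤ 3)]
    have hs3 : ℓ ^ (-(1:ℝ)/2) = (Real.sqrt ℓ)⁻¹ := by
      rw [show (-(1:ℝ)/2) = -(1/2) by norm_num, Real.rpow_neg hℓ0.le,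
        show ((1:ℝ)/2) = ((1:ℝ)/2) from rfl, ← Real.sqrt_eq_rpow]
    rw [hs3]
    calc G ≤ Real.sqrt (9 / ℓ) := hs1
      _ = 3 / Real.sqrt ℓ := hs2
      _ = 3 * (Real.sqrt ℓ)⁻¹ := div_eq_mul_inv 3 _
  -- final assembly
  have tri : |I2 - Real.sqrt (π / a) * ℓ ^ ((1:ℝ)/2)|
      ≤ |I2 - ℓ * J| + |ℓ * J - Real.sqrt (π / a) * ℓ ^ ((1:ℝ)/2)| := abs_sub_le _ _ _
  have hr0 : (0:ℝ) ≤ ℓ ^ (-(1:ℝ)/2) := Real.rpow_nonneg hℓ0.le _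
  have m1 : 5 * (a + 3) * G ≤ 5 * (a + 3) * (3 * ℓ ^ (-(1:ℝ)/2)) :=
    mul_le_mul_of_nonneg_left h4 (by nlinarith)
  rw [h3] at h2
  nlinarith [tri, h1, h2, h4, m1, mul_nonneg (show (0:ℝ) ≤ a by linarith) hr0]

/-- Total scalar curvature integral `I_R(ℓ)` (up to the factor `2(n−1)ω_{n−1}`). -/
noncomputable def IR (n : ℕ) (ℓ : ℝ) : ℝ :=
  ∫ s in (-1 : ℝ)..1,
    Real.exp (-((n : ℝ) - 2) * ℓ * s ^ 2) * (1 - s ^ 2) ^ (((n : ℝ) - 2) / 2) *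
      ((n : ℝ) / 2 + 2 * ℓ - 2 * ((n : ℝ) + 1) * ℓ * s ^ 2
        + (4 - 2 * (n : ℝ)) * ℓ ^ 2 * s ^ 2 * (1 - s ^ 2))

/-- For `n ≥ 5`, there are `C > 0` and `ℓ₀ ≥ 1` such that for all `ℓ ≥ ℓ₀`,
`|I_R(ℓ) − √(π/(n−2)) ℓ^{1/2}| ≤ C ℓ^{−1/2}`; in particular
`ℓ^{−1/2} I_R(ℓ) → √(π/(n−2))` as `ℓ → ∞`, and `I_R(ℓ) > 0` for all large `ℓ`. -/
theorem stmt11 (n : ℕ) (hn : 5 ≤ n) :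
    (∃ C > (0 : ℝ), ∃ ℓ₀ ≥ (1 : ℝ), ∀ ℓ ≥ ℓ₀,
        |IR n ℓ - Real.sqrt (π / ((n : ℝ) - 2)) * ℓ ^ ((1 : ℝ) / 2)|
          ≤ C * ℓ ^ (-(1 : ℝ) / 2)) ∧
      Tendsto (fun ℓ : ℝ => ℓ ^ (-(1 : ℝ) / 2) * IR n ℓ) atTop
        (nhds (Real.sqrt (π / ((n : ℝ) - 2)))) ∧
      (∀ᶠ ℓ : ℝ in atTop, 0 < IR n ℓ) := by
  have hn5 : (5:ℝ) ≤ (n:ℝ) := by exact_mod_cast hn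
  set a : ℝ := (n:ℝ) - 2 with hadef
  have ha : 3 ≤ a := by rw [hadef]; linarith
  have hna : (n:ℝ) = a + 2 := by rw [hadef]; ring
  set L : ℝ := Real.sqrt (π / a) with hL
  have hLpos : 0 < L := Real.sqrt_pos.mpr (by positivity)
  -- rewrite IR
  have hIR : ∀ ℓ : ℝ, IR n ℓ = ∫ s in (-1:ℝ)..1,
      Real.exp (-(a * ℓ) * s ^ 2) * (1 - s ^ 2) ^ (a / 2) *
        ((a + 2) / 2 + ℓ - (a + 3) * ℓ * s ^ 2) := by
    intro ℓ
    rw [IR, ← ibp a ℓ ha]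
    apply intervalIntegral.integral_congr
    intro s _
    dsimp only
    rw [show -((n:ℝ) - 2) * ℓ * s ^ 2 = -(a * ℓ) * s ^ 2 by rw [hadef]; ring,
      show ((n:ℝ) - 2) / 2 = a / 2 by rw [hadef], hna]
    ring
  -- the main bound
  have hbound : ∀ ℓ : ℝ, 1 ≤ ℓ →
      |IR n ℓ - L * ℓ ^ ((1:ℝ)/2)| ≤ 18 * ((n:ℝ) + 1) * ℓ ^ (-(1:ℝ)/2) := by
    intro ℓ hℓ
    rw [hIR ℓ]
    rw [show (n:ℝ) + 1 = a + 3 by rw [hadef]; ring, hL]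
    exact est a ℓ ha hℓ
  have hCpos : (0:ℝ) < 18 * ((n:ℝ) + 1) := by positivity
  -- part 2 : tendsto
  have hsq2 : ∀ ℓ : ℝ, 1 ≤ ℓ →
      |ℓ ^ (-(1:ℝ)/2) * IR n ℓ - L| ≤ 18 * ((n:ℝ) + 1) * ℓ⁻¹ := by
    intro ℓ hℓ
    have hℓ0 : (0:ℝ) < ℓ := by linarith
    have hrr : ℓ ^ (-(1:ℝ)/2) * ℓ ^ ((1:ℝ)/2) = 1 := by
      rw [← Real.rpow_add hℓ0]; norm_num
    have hrr2 : ℓ ^ (-(1:ℝ)/2) * ℓ ^ (-(1:ℝ)/2) = ℓ⁻¹ := by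
      rw [← Real.rpow_add hℓ0]
      norm_num
      exact Real.rpow_neg_one ℓ
    have h0 : (0:ℝ) ≤ ℓ ^ (-(1:ℝ)/2) := (Real.rpow_pos_of_pos hℓ0 _).le
    have heq : ℓ ^ (-(1:ℝ)/2) * IR n ℓ - L
        = ℓ ^ (-(1:ℝ)/2) * (IR n ℓ - L * ℓ ^ ((1:ℝ)/2)) := by
      rw [mul_sub, show ℓ ^ (-(1:ℝ)/2) * (L * ℓ ^ ((1:ℝ)/2))
        = L * (ℓ ^ (-(1:ℝ)/2) * ℓ ^ ((1:ℝ)/2)) by ring, hrr, mul_one]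
    rw [heq, abs_mul, abs_of_nonneg h0]
    calc ℓ ^ (-(1:ℝ)/2) * |IR n ℓ - L * ℓ ^ ((1:ℝ)/2)|
        ≤ ℓ ^ (-(1:ℝ)/2) * (18 * ((n:ℝ) + 1) * ℓ ^ (-(1:ℝ)/2)) :=
          mul_le_mul_of_nonneg_left (hbound ℓ hℓ) h0
      _ = 18 * ((n:ℝ) + 1) * (ℓ ^ (-(1:ℝ)/2) * ℓ ^ (-(1:ℝ)/2)) := by ring
      _ = 18 * ((n:ℝ) + 1) * ℓ⁻¹ := by rw [hrr2]
  have htend : Tendsto (fun ℓ : ℝ => ℓ ^ (-(1:ℝ)/2) * IR n ℓ) atTop (nhds L) := by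
    rw [tendsto_iff_dist_tendsto_zero]
    refine squeeze_zero' (g := fun ℓ : ℝ => 18 * ((n:ℝ) + 1) * ℓ⁻¹)
      (Filter.Eventually.of_forall fun ℓ => dist_nonneg) ?_ ?_
    · filter_upwards [eventually_ge_atTop (1:ℝ)] with ℓ hℓ
      rw [Real.dist_eq]
      exact hsq2 ℓ hℓ
    · have h := tendsto_inv_atTop_zero (𝕜 := ℝ)
      have := h.const_mul (18 * ((n:ℝ) + 1))
      simpa using this
  refine ⟨⟨18 * ((n:ℝ) + 1), hCpos, 1, le_refl _, fun ℓ hℓ => hbound ℓ hℓ⟩, htend, ?_⟩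
  have hev := htend.eventually (eventually_gt_nhds hLpos)
  filter_upwards [hev, eventually_gt_atTop (0:ℝ)] with ℓ h1 h2
  have hx : 0 < ℓ ^ (-(1:ℝ)/2) := Real.rpow_pos_of_pos h2 _
  by_contra hc
  push_neg at hc
  nlinarith [mul_nonpos_of_nonneg_of_nonpos hx.le hc]
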